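/- The Korteweg stress tensor K = (ρ div(K(ρ)∇ρ) + ½(K(ρ) − ρK'(ρ))|∇ρ|²) I − K(ρ) ∇ρ ⊗ ∇ρ satisfies, for smooth ρ > 0, the identity div(K) = ρ ∇(√(K(ρ)) Δ(G(ρ))), where G(r) = ∫₀^r √(K(s)) ds; equivalently div(K) = ρ∇(K(ρ)Δρ + ½K'(ρ)|∇ρ|²). -/

import Mathlib

noncomputable def pd {n : ℕ} (i : Fin n) (f : (Fin n → ℝ) → ℝ) (x : Fin n → ℝ) : ℝ :=
  fderiv ℝ f x (Pi.single i 1)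

noncomputable def lap {n : ℕ} (f : (Fin n → ℝ) → ℝ) (x : Fin n → ℝ) : ℝ :=
  ∑ i, pd i (fun y => pd i f y) x

section helpers
variable {n : ℕ}

lemma clm_apply_eq (L : ℝ →L[ℝ] ℝ) (u : ℝ) : L u = u * L 1 := by
  have := L.map_smul u 1
  simpa [smul_eq_mul] using this

lemma pd_add {f g : (Fin n → ℝ) → ℝ} (i : Fin n) (x : Fin n → ℝ)
    (hf : DifferentiableAt ℝ f x) (hg : DifferentiableAt ℝ g x) :
    pd i (fun y => f y + g y) x = pd i f x + pd i g x := by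
  unfold pd; rw [fderiv_fun_add hf hg]; rfl

lemma pd_sub {f g : (Fin n → ℝ) → ℝ} (i : Fin n) (x : Fin n → ℝ)
    (hf : DifferentiableAt ℝ f x) (hg : DifferentiableAt ℝ g x) :
    pd i (fun y => f y - g y) x = pd i f x - pd i g x := by
  unfold pd; rw [fderiv_fun_sub hf hg]; rfl

lemma pd_neg (f : (Fin n → ℝ) → ℝ) (i : Fin n) (x : Fin n → ℝ) :
    pd i (fun y => -(f y)) x = -pd i f x := by
  unfold pd; rw [fderiv_fun_neg]; rfl

lemma pd_mul {f g : (Fin n → ℝ) → ℝ} (i : Fin n) (x : Fin n → ℝ)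
    (hf : DifferentiableAt ℝ f x) (hg : DifferentiableAt ℝ g x) :
    pd i (fun y => f y * g y) x = pd i f x * g x + f x * pd i g x := by
  unfold pd; rw [fderiv_fun_mul hf hg]
  simp [smul_eq_mul]; ring

lemma pd_const_mul {f : (Fin n → ℝ) → ℝ} (c : ℝ) (i : Fin n) (x : Fin n → ℝ)
    (hf : DifferentiableAt ℝ f x) :
    pd i (fun y => c * f y) x = c * pd i f x := by
  unfold pd; rw [fderiv_const_mul hf]; rfl

lemma pd_sum {ι : Type*} (s : Finset ι) (f : ι → (Fin n → ℝ) → ℝ) (i : Fin n) (x : Fin n → ℝ)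
    (hf : ∀ k ∈ s, DifferentiableAt ℝ (f k) x) :
    pd i (fun y => ∑ k ∈ s, f k y) x = ∑ k ∈ s, pd i (f k) x := by
  unfold pd; rw [fderiv_fun_sum hf]; simp

lemma pd_comp {ρ : (Fin n → ℝ) → ℝ} {f : ℝ → ℝ} (i : Fin n) (x : Fin n → ℝ)
    (hρ : DifferentiableAt ℝ ρ x) (hf : DifferentiableAt ℝ f (ρ x)) :
    pd i (fun y => f (ρ y)) x = deriv f (ρ x) * pd i ρ x := by
  unfold pd
  have h := fderiv_comp x hf hρ
  rw [show (fun y => f (ρ y)) = f ∘ ρ from rfl, h]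
  rw [ContinuousLinearMap.comp_apply, clm_apply_eq, fderiv_apply_one_eq_deriv]
  ring

lemma contDiff_pd {m : ℕ} {f : (Fin n → ℝ) → ℝ} (hf : ContDiff ℝ (m + 1) f) (i : Fin n) :
    ContDiff ℝ m (pd i f) := by
  have h1 : ContDiff ℝ m (fderiv ℝ f) := hf.fderiv_right (by norm_cast)
  exact h1.clm_apply contDiff_const

lemma pd_pd_symm {f : (Fin n → ℝ) → ℝ} (hf : ContDiff ℝ 2 f) (i j : Fin n) (x : Fin n → ℝ) :
    pd j (fun y => pd i f y) x = pd i (fun y => pd j f y) x := by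
  have hsymm : IsSymmSndFDerivAt ℝ f x := hf.contDiffAt.isSymmSndFDerivAt (by norm_num)
  have key : ∀ (a b : Fin n), pd b (fun y => pd a f y) x
      = fderiv ℝ (fderiv ℝ f) x (Pi.single b 1) (Pi.single a 1) := by
    intro a b
    unfold pd
    have hdf : DifferentiableAt ℝ (fderiv ℝ f) x :=
      (hf.fderiv_right (m := 1) (by norm_cast)).differentiable (by norm_num) x
    rw [fderiv_clm_apply hdf (differentiableAt_const _)]
    simp
  rw [key i j, key j i, hsymm]
end helpers

/-- Divergence of the Korteweg stress tensor
`𝐊 = (ρ div(K(ρ)∇ρ) + ½(K(ρ)−ρK'(ρ))|∇ρ|²) I − K(ρ)∇ρ⊗∇ρ`: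
`div 𝐊 = ρ∇(√(K(ρ))Δ(G(ρ))) = ρ∇(K(ρ)Δρ + ½K'(ρ)|∇ρ|²)` (row-wise divergence). -/
theorem korteweg_tensor_divergence {n : ℕ}
    (ρ : (Fin n → ℝ) → ℝ) (K G : ℝ → ℝ)
    (hρ : ContDiff ℝ 3 ρ) (hρpos : ∀ x, 0 < ρ x)
    (hK : ContDiffOn ℝ 2 K (Set.Ioi 0)) (hKpos : ∀ r > (0:ℝ), 0 < K r)
    (hG : ∀ r > (0:ℝ), deriv G r = Real.sqrt (K r))
    (hG3 : ContDiffOn ℝ 3 G (Set.Ioi 0))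
    (M : (Fin n → ℝ) → Matrix (Fin n) (Fin n) ℝ)
    (hM : ∀ x i j, M x i j =
      (ρ x * (∑ k, pd k (fun y => K (ρ y) * pd k ρ y) x)
        + (1/2) * (K (ρ x) - ρ x * deriv K (ρ x)) * (∑ k, (pd k ρ x) ^ 2))
        * (if i = j then 1 else 0)
      - K (ρ x) * pd i ρ x * pd j ρ x) :
    ∀ (x : Fin n → ℝ) (i : Fin n),
      (∑ j, pd j (fun y => M y i j) x)
        = ρ x * pd i (fun y => Real.sqrt (K (ρ y)) * lap (fun z => G (ρ z)) y) x
      ∧ (∑ j, pd j (fun y => M y i j) x)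
        = ρ x * pd i (fun y => K (ρ y) * lap ρ y
            + (1/2) * deriv K (ρ y) * (∑ k, (pd k ρ y) ^ 2)) x := by
  -- basic regularity
  have hρ2 : ContDiff ℝ 2 ρ := hρ.of_le (by norm_num)
  have hρd : Differentiable ℝ ρ := hρ.differentiable (by norm_num)
  have hmem : ∀ y, ρ y ∈ Set.Ioi (0:ℝ) := fun y => hρpos y
  have hKρ : ContDiff ℝ 2 (fun y => K (ρ y)) := hK.comp_contDiff hρ2 hmem
  have hK' : ContDiffOn ℝ 1 (deriv K) (Set.Ioi 0) := hK.deriv_of_isOpen isOpen_Ioi (by norm_num)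
  have hK'ρ : ContDiff ℝ 1 (fun y => deriv K (ρ y)) :=
    hK'.comp_contDiff (hρ.of_le (by norm_num)) hmem
  have hpd : ∀ k : Fin n, ContDiff ℝ 2 (pd k ρ) := fun k =>
    contDiff_pd (m := 2) (hρ.of_le (by norm_num)) k
  have hpdd : ∀ k : Fin n, Differentiable ℝ (pd k ρ) := fun k =>
    (hpd k).differentiable (by norm_num)
  have hpdpd : ∀ k l : Fin n, Differentiable ℝ (fun y => pd l (fun z => pd k ρ z) y) := by
    intro k l
    exact (contDiff_pd (m := 1) (hpd k) l).differentiable (by norm_num)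
  have hWd : Differentiable ℝ (fun y => ∑ k, (pd k ρ y)^2) := by
    apply Differentiable.fun_sum
    intro k _
    exact (hpdd k).pow 2
  have hlapd : Differentiable ℝ (fun y => lap ρ y) := by
    unfold lap
    apply Differentiable.fun_sum
    intro k _
    exact hpdpd k k
  have hKρd : Differentiable ℝ (fun y => K (ρ y)) := hKρ.differentiable (by norm_num)
  have hK'ρd : Differentiable ℝ (fun y => deriv K (ρ y)) := hK'ρ.differentiable (by norm_num)
  have hKdiff : ∀ r : ℝ, 0 < r → DifferentiableAt ℝ K r := fun r hr =>
    ((hK.differentiableOn (by norm_num)) r hr).differentiableAt (isOpen_Ioi.mem_nhds hr)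
  -- the target C¹ function F
  set F : (Fin n → ℝ) → ℝ :=
    fun y => K (ρ y) * lap ρ y + (1/2) * deriv K (ρ y) * (∑ k, (pd k ρ y)^2) with hFdef
  have hFd : Differentiable ℝ F := by
    apply Differentiable.add (hKρd.mul hlapd)
    exact ((differentiable_const _).mul hK'ρd).mul hWd
  -- pointwise rewriting of div(K(ρ)∇ρ)
  have hD : ∀ y, (∑ k, pd k (fun z => K (ρ z) * pd k ρ z) y)
      = K (ρ y) * lap ρ y + deriv K (ρ y) * (∑ k, (pd k ρ y)^2) := by
    intro y
    have e : ∀ k : Fin n, pd k (fun z => K (ρ z) * pd k ρ z) y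
        = deriv K (ρ y) * pd k ρ y * pd k ρ y + K (ρ y) * pd k (fun z => pd k ρ z) y := by
      intro k
      rw [pd_mul k y (hKρd y) (hpdd k y), pd_comp k y (hρd y) (hKdiff _ (hρpos y))]
    have e' : ∀ k : Fin n, pd k (fun z => K (ρ z) * pd k ρ z) y
        = deriv K (ρ y) * (pd k ρ y)^2 + K (ρ y) * pd k (fun z => pd k ρ z) y := by
      intro k; rw [e k]; ring
    rw [Finset.sum_congr rfl (fun k _ => e' k), Finset.sum_add_distrib, ← Finset.mul_sum,
      ← Finset.mul_sum]
    unfold lap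
    ring
  -- rewriting of the rows of M
  have hC : ∀ i j : Fin n, (fun y => M y i j) = fun y =>
      (ρ y * F y + (1/2) * K (ρ y) * (∑ k, (pd k ρ y)^2)) * (if i = j then 1 else 0)
        - K (ρ y) * pd i ρ y * pd j ρ y := by
    intro i j
    funext y
    rw [hM y i j, hD y, hFdef]
    ring
  intro x i
  -- atoms
  set S1 : ℝ := ∑ k, (pd k ρ x)^2 with hS1
  set S2 : ℝ := ∑ k, pd k (fun z => pd k ρ z) x with hS2
  set S3 : ℝ := ∑ k, pd k ρ x * pd i (fun z => pd k ρ z) x with hS3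
  have hCd : Differentiable ℝ (fun y => ρ y * F y + (1/2) * K (ρ y) * (∑ k, (pd k ρ y)^2)) := by
    exact (hρd.mul hFd).add (((differentiable_const _).mul hKρd).mul hWd)
  have hPd : ∀ j : Fin n, Differentiable ℝ (fun y => K (ρ y) * pd i ρ y * pd j ρ y) := by
    intro j
    exact ((hKρd.mul (hpdd i)).mul (hpdd j))
  -- per-entry divergence
  have hrow : ∀ j : Fin n, pd j (fun y => M y i j) x
      = (if i = j then pd j (fun y => ρ y * F y + (1/2) * K (ρ y) * (∑ k, (pd k ρ y)^2)) x else 0)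
        - pd j (fun y => K (ρ y) * pd i ρ y * pd j ρ y) x := by
    intro j
    rw [hC i j]
    by_cases h : i = j
    · subst h
      simp only [eq_self_iff_true, if_true, mul_one]
      exact pd_sub i x (hCd x) (hPd i x)
    · simp only [if_neg h, mul_zero, zero_sub]
      rw [pd_neg]
  have hLHS : (∑ j, pd j (fun y => M y i j) x)
      = pd i (fun y => ρ y * F y + (1/2) * K (ρ y) * (∑ k, (pd k ρ y)^2)) x
        - ∑ j, pd j (fun y => K (ρ y) * pd i ρ y * pd j ρ y) x := by
    rw [Finset.sum_congr rfl (fun j _ => hrow j), Finset.sum_sub_distrib]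
    congr 1
    rw [Finset.sum_ite_eq]
    simp
  -- compute the subtracted sum
  have hsum : (∑ j, pd j (fun y => K (ρ y) * pd i ρ y * pd j ρ y) x)
      = deriv K (ρ x) * pd i ρ x * S1 + K (ρ x) * S3 + K (ρ x) * pd i ρ x * S2 := by
    have e : ∀ j : Fin n, pd j (fun y => K (ρ y) * pd i ρ y * pd j ρ y) x
        = deriv K (ρ x) * pd i ρ x * (pd j ρ x)^2
          + K (ρ x) * (pd j ρ x * pd i (fun z => pd j ρ z) x)
          + K (ρ x) * pd i ρ x * pd j (fun z => pd j ρ z) x := by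
      intro j
      rw [pd_mul j x ((hKρd.fun_mul (hpdd i)) x) (hpdd j x),
        pd_mul j x (hKρd x) (hpdd i x),
        pd_comp j x (hρd x) (hKdiff _ (hρpos x)),
        pd_pd_symm hρ2 i j x]
      ring
    rw [Finset.sum_congr rfl (fun j _ => e j), Finset.sum_add_distrib, Finset.sum_add_distrib,
      ← Finset.mul_sum, ← Finset.mul_sum, ← Finset.mul_sum, ← hS1, ← hS2, ← hS3]
  -- compute pd i of |∇ρ|²
  have hWpd : pd i (fun y => ∑ k, (pd k ρ y)^2) x = 2 * S3 := by
    rw [pd_sum Finset.univ _ i x (fun k _ => ((hpdd k).fun_pow 2) x)]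
    have e : ∀ k : Fin n, pd i (fun y => (pd k ρ y)^2) x
        = 2 * (pd k ρ x * pd i (fun z => pd k ρ z) x) := by
      intro k
      have : (fun y => (pd k ρ y)^2) = fun y => pd k ρ y * pd k ρ y := by
        funext y; ring
      rw [this, pd_mul i x (hpdd k x) (hpdd k x)]
      ring
    rw [Finset.sum_congr rfl (fun k _ => e k), ← Finset.mul_sum, ← hS3]
  -- compute pd i of the diagonal coefficient
  have hdiag : pd i (fun y => ρ y * F y + (1/2) * K (ρ y) * (∑ k, (pd k ρ y)^2)) x
      = pd i ρ x * F x + ρ x * pd i F x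
        + (1/2) * (deriv K (ρ x) * pd i ρ x) * S1 + (1/2) * K (ρ x) * (2 * S3) := by
    rw [pd_add i x ((hρd.fun_mul hFd) x) ((((differentiable_const _).fun_mul hKρd).fun_mul hWd) x),
      pd_mul i x (hρd x) (hFd x)]
    have h2 : pd i (fun y => (1/2) * K (ρ y) * (∑ k, (pd k ρ y)^2)) x
        = (1/2) * (deriv K (ρ x) * pd i ρ x) * S1 + (1/2) * K (ρ x) * (2 * S3) := by
      rw [pd_mul i x (((differentiable_const _).fun_mul hKρd) x) (hWd x),
        pd_const_mul (1/2) i x (hKρd x),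
        pd_comp i x (hρd x) (hKdiff _ (hρpos x)), hWpd, ← hS1]
    rw [h2]
    ring
  have hFx : F x = K (ρ x) * S2 + (1/2) * deriv K (ρ x) * S1 := by
    rw [hFdef]; rfl
  -- part 2
  have part2 : (∑ j, pd j (fun y => M y i j) x) = ρ x * pd i F x := by
    rw [hLHS, hsum, hdiag, hFx]
    ring
  refine ⟨?_, part2⟩
  -- part 1: the two inner functions agree
  have hGd : ∀ r : ℝ, 0 < r → DifferentiableAt ℝ G r := fun r hr =>
    ((hG3.differentiableOn (by norm_num)) r hr).differentiableAt (isOpen_Ioi.mem_nhds hr)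
  have hGfun : ∀ k : Fin n, (fun z => pd k (fun w => G (ρ w)) z)
      = fun z => Real.sqrt (K (ρ z)) * pd k ρ z := by
    intro k
    funext z
    rw [pd_comp k z (hρd z) (hGd _ (hρpos z)), hG _ (hρpos z)]
  have hsq : ∀ y, HasDerivAt (fun r => Real.sqrt (K r))
      (1 / (2 * Real.sqrt (K (ρ y))) * deriv K (ρ y)) (ρ y) := by
    intro y
    have h1 : HasDerivAt K (deriv K (ρ y)) (ρ y) := (hKdiff _ (hρpos y)).hasDerivAt
    exact (Real.hasDerivAt_sqrt (ne_of_gt (hKpos _ (hρpos y)))).comp (ρ y) h1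
  have hsqd : ∀ y, DifferentiableAt ℝ (fun r => Real.sqrt (K r)) (ρ y) := fun y =>
    (hsq y).differentiableAt
  have hfun : (fun y => Real.sqrt (K (ρ y)) * lap (fun z => G (ρ z)) y) = F := by
    funext y
    have h0 : (0:ℝ) < K (ρ y) := hKpos _ (hρpos y)
    have hne : Real.sqrt (K (ρ y)) ≠ 0 := ne_of_gt (Real.sqrt_pos.mpr h0)
    have hmul : Real.sqrt (K (ρ y)) * Real.sqrt (K (ρ y)) = K (ρ y) := Real.mul_self_sqrt h0.le
    have ek : ∀ k : Fin n, pd k (fun z => pd k (fun w => G (ρ w)) z) y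
        = 1 / (2 * Real.sqrt (K (ρ y))) * deriv K (ρ y) * pd k ρ y * pd k ρ y
            + Real.sqrt (K (ρ y)) * pd k (fun z => pd k ρ z) y := by
      intro k
      have hsd : DifferentiableAt ℝ (fun z => Real.sqrt (K (ρ z))) y :=
        (hsqd y).comp y (hρd y)
      rw [show (fun z => pd k (fun w => G (ρ w)) z) = fun z => Real.sqrt (K (ρ z)) * pd k ρ z
        from hGfun k]
      rw [pd_mul k y hsd (hpdd k y), pd_comp k y (hρd y) (hsqd y), (hsq y).deriv]
    have hlapG : lap (fun z => G (ρ z)) y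
        = ∑ k, (1 / (2 * Real.sqrt (K (ρ y))) * deriv K (ρ y) * pd k ρ y * pd k ρ y
            + Real.sqrt (K (ρ y)) * pd k (fun z => pd k ρ z) y) := by
      unfold lap
      exact Finset.sum_congr rfl (fun k _ => ek k)
    have hFy : F y = K (ρ y) * (∑ k, pd k (fun z => pd k ρ z) y)
        + (1/2) * deriv K (ρ y) * (∑ k, (pd k ρ y)^2) := rfl
    have hgoal : Real.sqrt (K (ρ y))
        * (∑ k, (1 / (2 * Real.sqrt (K (ρ y))) * deriv K (ρ y) * pd k ρ y * pd k ρ y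
            + Real.sqrt (K (ρ y)) * pd k (fun z => pd k ρ z) y))
        = K (ρ y) * (∑ k, pd k (fun z => pd k ρ z) y)
          + (1/2) * deriv K (ρ y) * (∑ k, (pd k ρ y)^2) := by
      rw [Finset.mul_sum, Finset.mul_sum, Finset.mul_sum, ← Finset.sum_add_distrib]
      refine Finset.sum_congr rfl (fun k _ => ?_)
      set a := Real.sqrt (K (ρ y)) with ha
      have hane : a ≠ 0 := hne
      rw [← hmul]
      field_simp
      ring
    rw [hlapG, hFy, hgoal]
  rw [hfun]
  exact part2
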